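/- For n ≥ 2, B_n[2, f_{2n−1}] = B_{n+1}[f_{2n}+2, f_{2n+1}]; that is, the set of sub-words of words in B_n occupying positions 2 through f_{2n−1} equals the set of sub-words of words in B_{n+1} occupying positions f_{2n}+2 through f_{2n+1}. -/

import Mathlib

/-- The two-letter alphabet. -/
inductive Letter : Type
  | a : Letter
  | b : Letter
deriving DecidableEq

/-- A word is a finite sequence of letters. -/
abbrev Word := List Letter

/-- Concatenation set `UV = {uv : u ∈ U, v ∈ V}`. -/
def concatSet (U V : Set Word) : Set Word := {w | ∃ u ∈ U, ∃ v ∈ V, w = u ++ v}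

mutual
  /-- The sets `A_n` of inflated words (indexed so that `Aset 1 = {a}`). -/
  def Aset : ℕ → Set Word
    | 0 => ∅
    | 1 => {[Letter.a]}
    | n + 2 => concatSet (Bset (n + 1)) (concatSet (Aset (n + 1)) (Aset (n + 1)))
  /-- The sets `B_n` of inflated words (indexed so that `Bset 1 = {b}`). -/
  def Bset : ℕ → Set Word
    | 0 => ∅
    | 1 => {[Letter.b]}
    | n + 2 => concatSet (Aset (n + 1)) (Bset (n + 1)) ∪ concatSet (Bset (n + 1)) (Aset (n + 1))
end

/-- The sub-word `w[a,b] = w_a w_{a+1} … w_b` (1-indexed). -/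
def wordSlice (w : Word) (i j : ℕ) : Word := (w.drop (i - 1)).take (j - i + 1)

/-- `W[a,b] = {w[a,b] : w ∈ W}`. -/
def setSlice (W : Set Word) (i j : ℕ) : Set Word := {x | ∃ w ∈ W, x = wordSlice w i j}

/-- `x` is a sub-word (contiguous factor) of `w`. -/
def IsFactor (x w : Word) : Prop := ∃ u v : Word, w = u ++ x ++ v

/-- `F(S, m)`: the set of all sub-words of length `m` of words in `S`. -/
def FactorSet (S : Set Word) (m : ℕ) : Set Word :=
  {x | x.length = m ∧ ∃ w ∈ S, IsFactor x w}

/-- `F(A, m) = ⋃_{n ≥ 1} F(A_n, m)`. -/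
def FA (m : ℕ) : Set Word := ⋃ n ∈ {n : ℕ | 1 ≤ n}, FactorSet (Aset n) m

/-- `F(B, m) = ⋃_{n ≥ 1} F(B_n, m)`. -/
def FB (m : ℕ) : Set Word := ⋃ n ∈ {n : ℕ | 1 ≤ n}, FactorSet (Bset n) m

/-- The golden mean `τ = (1 + √5)/2`. -/
noncomputable def tau : ℝ := (1 + Real.sqrt 5) / 2


lemma lengthAB : ∀ n : ℕ, (∀ w ∈ Aset (n+1), w.length = Nat.fib (2*n+2)) ∧
    (∀ w ∈ Bset (n+1), w.length = Nat.fib (2*n+1)) := by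
  intro n
  induction n with
  | zero =>
    constructor
    · intro w hw; simp [Aset] at hw; subst hw; simp
    · intro w hw; simp [Bset] at hw; subst hw; simp
  | succ k ih =>
    obtain ⟨ihA, ihB⟩ := ih
    constructor
    · intro w hw
      simp only [Aset, concatSet, Set.mem_setOf_eq] at hw
      obtain ⟨u, hu, v, ⟨v1, hv1, v2, hv2, rfl⟩, rfl⟩ := hw
      have h1 := ihB u hu
      have h2 := ihA v1 hv1
      have h3 := ihA v2 hv2
      have e1 : Nat.fib (2*k+3) = Nat.fib (2*k+2) + Nat.fib (2*k+1) := by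
        rw [show 2*k+3 = (2*k+1)+2 by ring, Nat.fib_add_two]; ring
      have e2 : Nat.fib (2*k+4) = Nat.fib (2*k+3) + Nat.fib (2*k+2) := by
        rw [show 2*k+4 = (2*k+2)+2 by ring, Nat.fib_add_two]; ring
      simp only [List.length_append, h1, h2, h3]
      have : 2*(k+1)+2 = 2*k+4 := by ring
      rw [this]; omega
    · intro w hw
      simp only [Bset, concatSet, Set.mem_union, Set.mem_setOf_eq] at hw
      have e1 : Nat.fib (2*k+3) = Nat.fib (2*k+2) + Nat.fib (2*k+1) := by
        rw [show 2*k+3 = (2*k+1)+2 by ring, Nat.fib_add_two]; ring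
      have : 2*(k+1)+1 = 2*k+3 := by ring
      rw [this]
      rcases hw with ⟨u, hu, v, hv, rfl⟩ | ⟨u, hu, v, hv, rfl⟩
      · have h1 := ihA u hu; have h2 := ihB v hv
        simp only [List.length_append, h1, h2]; omega
      · have h1 := ihB u hu; have h2 := ihA v hv
        simp only [List.length_append, h1, h2]; omega

lemma nonemptyAB : ∀ n : ℕ, (∃ w, w ∈ Aset (n+1)) ∧ (∃ w, w ∈ Bset (n+1)) := by
  intro n
  induction n with
  | zero => exact ⟨⟨[Letter.a], by simp [Aset]⟩, ⟨[Letter.b], by simp [Bset]⟩⟩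
  | succ k ih =>
    obtain ⟨⟨u, hu⟩, ⟨v, hv⟩⟩ := ih
    refine ⟨⟨v ++ (u ++ u), ?_⟩, ⟨u ++ v, ?_⟩⟩
    · simp only [Aset, concatSet, Set.mem_setOf_eq]
      exact ⟨v, hv, u ++ u, ⟨u, hu, u, hu, rfl⟩, rfl⟩
    · simp only [Bset, concatSet, Set.mem_union, Set.mem_setOf_eq]
      exact Or.inl ⟨u, hu, v, hv, rfl⟩

/-- Key lemma: the suffix of length `fib (2k+3) - 1` of a word in `A_{k+2}` is the
tail of some word in `B_{k+2}`. -/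
lemma keyS : ∀ k : ℕ, ∀ w ∈ Aset (k+2), ∃ b ∈ Bset (k+2),
    w.drop (Nat.fib (2*k+2) + 1) = b.drop 1 := by
  intro k
  induction k with
  | zero =>
    intro w hw
    simp only [Aset, Bset, concatSet, Set.mem_setOf_eq] at hw
    obtain ⟨u, hu, v, ⟨v1, hv1, v2, hv2, rfl⟩, rfl⟩ := hw
    simp only [Set.mem_singleton_iff] at hu hv1 hv2
    subst hu; subst hv1; subst hv2
    refine ⟨[Letter.b] ++ [Letter.a], ?_, by simp⟩
    simp only [Bset, concatSet, Set.mem_union, Set.mem_setOf_eq]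
    exact Or.inr ⟨[Letter.b], rfl, [Letter.a], rfl, rfl⟩
  | succ k ih =>
    intro w hw
    simp only [Aset, concatSet, Set.mem_setOf_eq] at hw
    obtain ⟨u, hu, v, ⟨a1, ha1, a2, ha2, rfl⟩, rfl⟩ := hw
    have hlu : u.length = Nat.fib (2*k+3) := by
      have := (lengthAB (k+1)).2 u hu; rwa [show 2*(k+1)+1 = 2*k+3 by ring] at this
    have hla1 : a1.length = Nat.fib (2*k+4) := by
      have := (lengthAB (k+1)).1 a1 ha1; rwa [show 2*(k+1)+2 = 2*k+4 by ring] at this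
    obtain ⟨b, hb, hbd⟩ := ih a1 ha1
    have hlb : b.length = Nat.fib (2*k+3) := by
      have := (lengthAB (k+1)).2 b hb; rwa [show 2*(k+1)+1 = 2*k+3 by ring] at this
    refine ⟨b ++ a2, ?_, ?_⟩
    · simp only [Bset, concatSet, Set.mem_union, Set.mem_setOf_eq]
      exact Or.inr ⟨b, hb, a2, ha2, rfl⟩
    · have efib : Nat.fib (2*(k+1)+2) + 1 = u.length + (Nat.fib (2*k+2) + 1) := by
        rw [hlu, show 2*(k+1)+2 = (2*k+2)+2 by ring, Nat.fib_add_two (n := 2*k+2),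
          show 2*k+2+1 = 2*k+3 by ring]
        omega
      rw [efib, List.drop_length_add_append]
      have h1 : Nat.fib (2*k+2) + 1 ≤ a1.length := by
        rw [hla1, show 2*k+4 = (2*k+2)+2 by ring, Nat.fib_add_two (n := 2*k+2),
          show 2*k+2+1 = 2*k+3 by ring]
        have := Nat.fib_pos.2 (show 0 < 2*k+3 by omega)
        omega
      have h2 : (1 : ℕ) ≤ b.length := by
        rw [hlb]; exact Nat.fib_pos.2 (by omega)
      rw [List.drop_append_of_le_length h1, List.drop_append_of_le_length h2, hbd]

theorem suffix_Bset_eq_succ (n : ℕ) (hn : 2 ≤ n) :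
    setSlice (Bset n) 2 (Nat.fib (2 * n - 1)) =
      setSlice (Bset (n + 1)) (Nat.fib (2 * n) + 2) (Nat.fib (2 * n + 1)) := by
  obtain ⟨k, rfl⟩ : ∃ k, n = k + 2 := ⟨n - 2, by omega⟩
  have e1 : 2*(k+2) - 1 = 2*k+3 := by omega
  have e2 : 2*(k+2) = 2*k+4 := by ring
  have e3 : 2*(k+2) + 1 = 2*k+5 := by ring
  have f5 : Nat.fib (2*k+5) = Nat.fib (2*k+4) + Nat.fib (2*k+3) := by
    rw [show 2*k+5 = (2*k+3)+2 by ring, Nat.fib_add_two]; ring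
  have f4 : Nat.fib (2*k+4) = Nat.fib (2*k+3) + Nat.fib (2*k+2) := by
    rw [show 2*k+4 = (2*k+2)+2 by ring, Nat.fib_add_two]; ring
  have f3pos : 0 < Nat.fib (2*k+3) := Nat.fib_pos.2 (by omega)
  have f2pos : 0 < Nat.fib (2*k+2) := Nat.fib_pos.2 (by omega)
  have lenB2 : ∀ w ∈ Bset (k+2), w.length = Nat.fib (2*k+3) := by
    intro w hw
    have := (lengthAB (k+1)).2 w hw; rwa [show 2*(k+1)+1 = 2*k+3 by ring] at this
  have lenA2 : ∀ w ∈ Aset (k+2), w.length = Nat.fib (2*k+4) := by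
    intro w hw
    have := (lengthAB (k+1)).1 w hw; rwa [show 2*(k+1)+2 = 2*k+4 by ring] at this
  have lenB3 : ∀ w ∈ Bset (k+3), w.length = Nat.fib (2*k+5) := by
    intro w hw
    have := (lengthAB (k+2)).2 w hw; rwa [show 2*(k+2)+1 = 2*k+5 by ring] at this
  -- slice lemmas
  have sliceL : ∀ w ∈ Bset (k+2), wordSlice w 2 (Nat.fib (2*(k+2)-1)) = w.drop 1 := by
    intro w hw
    rw [e1]
    unfold wordSlice
    apply List.take_of_length_le
    rw [List.length_drop, lenB2 w hw]
    omega
  have sliceR : ∀ w ∈ Bset (k+3),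
      wordSlice w (Nat.fib (2*(k+2)) + 2) (Nat.fib (2*(k+2)+1)) =
        w.drop (Nat.fib (2*k+4) + 1) := by
    intro w hw
    rw [e3, e2]
    unfold wordSlice
    have : Nat.fib (2*k+4) + 2 - 1 = Nat.fib (2*k+4) + 1 := by omega
    rw [this]
    apply List.take_of_length_le
    rw [List.length_drop, lenB3 w hw]
    omega
  ext x
  simp only [setSlice, Set.mem_setOf_eq]
  constructor
  · rintro ⟨w, hw, rfl⟩
    obtain ⟨u, hu⟩ := (nonemptyAB (k+1)).1
    refine ⟨u ++ w, ?_, ?_⟩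
    · simp only [Bset, concatSet, Set.mem_union, Set.mem_setOf_eq]
      exact Or.inl ⟨u, hu, w, hw, rfl⟩
    · rw [sliceL w hw, sliceR (u ++ w) (by
        simp only [Bset, concatSet, Set.mem_union, Set.mem_setOf_eq]
        exact Or.inl ⟨u, hu, w, hw, rfl⟩)]
      have : Nat.fib (2*k+4) + 1 = u.length + 1 := by rw [lenA2 u hu]
      rw [this, List.drop_length_add_append]
  · rintro ⟨w, hw, rfl⟩
    rw [sliceR w hw]
    have hw' := hw
    simp only [Bset, concatSet, Set.mem_union, Set.mem_setOf_eq] at hw'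
    rcases hw' with ⟨u, hu, v, hv, rfl⟩ | ⟨v, hv, u, hu, rfl⟩
    · refine ⟨v, hv, ?_⟩
      rw [sliceL v hv]
      have : Nat.fib (2*k+4) + 1 = u.length + 1 := by rw [lenA2 u hu]
      rw [this, List.drop_length_add_append]
    · obtain ⟨b, hb, hbd⟩ := keyS k u hu
      refine ⟨b, hb, ?_⟩
      rw [sliceL b hb]
      have : Nat.fib (2*k+4) + 1 = v.length + (Nat.fib (2*k+2) + 1) := by
        rw [lenB2 v hv]; omega
      rw [this, List.drop_length_add_append, hbd]
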